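/- Let F be a real symmetric θ×θ matrix, c ∈ ℝ^θ, r > 0, and λ ∈ ℝ. Suppose the matrix F − λI is positive semidefinite, and v̂ ∈ ℝ^θ satisfies (F − λI) v̂ = −c and ‖v̂‖ = r. Then v̂ is a global minimizer of the trust region problem: for every v ∈ ℝ^θ with ‖v‖ = r, (1/2) v̂ᵀ F v̂ + cᵀ v̂ ≤ (1/2) vᵀ F v + cᵀ v. -/

import Mathlib

open Matrix

/-- Global optimality condition for the trust region problem. If
`F − λI` is positive semidefinite, `(F − λI) v̂ = −c` and `‖v̂‖ = r`, then `v̂`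
minimizes `(1/2) vᵀFv + cᵀv` over the sphere `‖v‖ = r`. -/
theorem trust_region_global_optimality
    (θ : ℕ) (F : Matrix (Fin θ) (Fin θ) ℝ) (hFsymm : F.IsSymm)
    (c : Fin θ → ℝ) (r : ℝ) (hr : 0 < r) (lam : ℝ)
    (hpsd : (F - lam • (1 : Matrix (Fin θ) (Fin θ) ℝ)).PosSemidef)
    (vhat : Fin θ → ℝ)
    (heq : (F - lam • (1 : Matrix (Fin θ) (Fin θ) ℝ)).mulVec vhat = -c)
    (hnorm : Real.sqrt (∑ i, vhat i ^ 2) = r) :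
    ∀ v : Fin θ → ℝ, Real.sqrt (∑ i, v i ^ 2) = r →
      (1 / 2) * (vhat ⬝ᵥ F.mulVec vhat) + c ⬝ᵥ vhat ≤
        (1 / 2) * (v ⬝ᵥ F.mulVec v) + c ⬝ᵥ v := by
  intro v hv
  set M := F - lam • (1 : Matrix (Fin θ) (Fin θ) ℝ) with hMdef
  have hs2 : ∑ i, vhat i ^ 2 = r ^ 2 := by
    have h := congrArg (· ^ 2) hnorm
    simpa [Real.sq_sqrt (Finset.sum_nonneg fun i _ => sq_nonneg (vhat i))] using h
  have hv2 : ∑ i, v i ^ 2 = r ^ 2 := by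
    have h := congrArg (· ^ 2) hv
    simpa [Real.sq_sqrt (Finset.sum_nonneg fun i _ => sq_nonneg (v i))] using h
  have hsymm : M.IsSymm := by
    simp [Matrix.IsSymm, hMdef, Matrix.transpose_sub, hFsymm.eq]
  have hcross : vhat ⬝ᵥ M.mulVec v = v ⬝ᵥ M.mulVec vhat := by
    rw [Matrix.dotProduct_mulVec, ← Matrix.mulVec_transpose, hsymm.eq,
      dotProduct_comm]
  have hpos : 0 ≤ (v - vhat) ⬝ᵥ M.mulVec (v - vhat) := by
    have := hpsd.dotProduct_mulVec_nonneg (v - vhat)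
    simpa using this
  have hexp : (v - vhat) ⬝ᵥ M.mulVec (v - vhat)
      = v ⬝ᵥ M.mulVec v - 2 * (v ⬝ᵥ M.mulVec vhat) + vhat ⬝ᵥ M.mulVec vhat := by
    rw [Matrix.mulVec_sub, sub_dotProduct, dotProduct_sub,
      dotProduct_sub, hcross]
    ring
  have hMv : v ⬝ᵥ M.mulVec vhat = -(c ⬝ᵥ v) := by
    rw [heq, dotProduct_neg, dotProduct_comm]
  have hMvh : vhat ⬝ᵥ M.mulVec vhat = -(c ⬝ᵥ vhat) := by
    rw [heq, dotProduct_neg, dotProduct_comm]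
  have hFv : ∀ x : Fin θ → ℝ, x ⬝ᵥ F.mulVec x = x ⬝ᵥ M.mulVec x + lam * ∑ i, x i ^ 2 := by
    intro x
    have : F.mulVec x = M.mulVec x + lam • x := by
      simp [hMdef, Matrix.sub_mulVec, Matrix.smul_mulVec]
    rw [this, dotProduct_add, dotProduct_smul]
    congr 1
    simp [dotProduct, smul_eq_mul, Finset.mul_sum, sq, mul_left_comm]
  rw [hFv v, hFv vhat, hs2, hv2]
  rw [hexp, hMv, hMvh] at hpos
  linarith
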